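/- Let $(u_\lambda,\mathcal{V}_\lambda^*,\kappa_\lambda)$ be a TI-DFD for $\mathcal{K}$ such that $0$ is an accumulation point of $(\kappa_\lambda)$, and suppose there exist $(e_\lambda)$ in $L^2(\mathbb{R}^d)$ with $u_\lambda^*\ast e_{\lambda'}=0$ for $\lambda\ne\lambda'$ and $\|u_\lambda^*\ast e_\lambda\|=1$. Then there is a sequence $\delta_n\to 0$ such that the worst-case error modulus satisfies $\epsilon(\mathcal{M}_{\mu,\rho},\delta_n) \ge \|\mathcal{U}^*\|^{-1}\|(\mathcal{V}^*)^\dagger\|^{-2\mu/(2\mu+1)}\,\delta_n^{2\mu/(2\mu+1)}\rho^{1/(2\mu+1)}$. -/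

import Mathlib

open MeasureTheory Complex Real
open scoped Classical

noncomputable section

/-- `Ed d` is Euclidean space `ℝ^d`. -/
abbrev Ed (d : ℕ) := EuclideanSpace ℝ (Fin d)

/-- `L2 d` is the Hilbert space `L²(ℝ^d, ℂ)`. -/
abbrev L2 (d : ℕ) := MeasureTheory.Lp ℂ 2 (volume : Measure (Ed d))

/-- An extension of the Fourier transform (normalization `f̂(ξ) = ∫ f(x) e^{-i⟨ξ,x⟩} dx`)
to a linear bijection of `L²(ℝ^d)` satisfying the Plancherel identity
`‖f̂‖² = (2π)^d ‖f‖²`. -/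
structure FourierL2 (d : ℕ) where
  F : L2 d ≃ₗ[ℂ] L2 d
  plancherel : ∀ f : L2 d, ‖F f‖ ^ 2 = (2 * Real.pi) ^ d * ‖f‖ ^ 2
  eq_integral : ∀ f : L2 d, MeasureTheory.Integrable (f : Ed d → ℂ) →
    (F f : Ed d → ℂ) =ᵐ[volume]
      fun ξ => ∫ x, Complex.exp (-(Complex.I * ((inner ℝ ξ x : ℝ) : ℂ))) * f x

/-- The convolution `u^* ∗ f := 𝓕⁻¹((conj 𝓕u) ⬝ 𝓕f)`, well defined in `L²` whenever
`𝓕u ∈ L^∞`. -/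
def starConv {d : ℕ} (Φ : FourierL2 d) (u f : L2 d) : L2 d :=
  if h : MemLp (fun ξ => (starRingEnd ℂ) ((Φ.F u : Ed d → ℂ) ξ) * (Φ.F f : Ed d → ℂ) ξ)
      2 (volume : Measure (Ed d))
  then Φ.F.symm (h.toLp _) else 0

/-- The convolution `w ∗ c := 𝓕⁻¹((𝓕w) ⬝ 𝓕c)`, well defined in `L²` whenever
`𝓕w ∈ L^∞`. -/
def conv {d : ℕ} (Φ : FourierL2 d) (w c : L2 d) : L2 d :=
  if h : MemLp (fun ξ => (Φ.F w : Ed d → ℂ) ξ * (Φ.F c : Ed d → ℂ) ξ)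
      2 (volume : Measure (Ed d))
  then Φ.F.symm (h.toLp _) else 0

/-- `(u_λ)` is a translation invariant frame of `L²(ℝ^d)` with bounds `A, B`:
all `𝓕u_λ ∈ L^∞` and `A‖f‖² ≤ ∑_λ ‖u_λ^* ∗ f‖² ≤ B‖f‖²` for every `f ∈ L²`. -/
def IsTIFrame {d : ℕ} {Λ : Type*} (Φ : FourierL2 d) (u : Λ → L2 d) (A B : ℝ) : Prop :=
  (∀ l : Λ, MemLp ((Φ.F (u l) : Ed d → ℂ)) ⊤ (volume : Measure (Ed d))) ∧
  0 < A ∧ 0 < B ∧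
  ∀ f : L2 d,
    A * ‖f‖ ^ 2 ≤ ∑' l : Λ, ‖starConv Φ (u l) f‖ ^ 2 ∧
    ∑' l : Λ, ‖starConv Φ (u l) f‖ ^ 2 ≤ B * ‖f‖ ^ 2


lemma starConv_zero {d : ℕ} (Φ : FourierL2 d) (u : L2 d) : starConv Φ u 0 = 0 := by
  unfold starConv
  have h0 : (fun ξ => (starRingEnd ℂ) ((Φ.F u : Ed d → ℂ) ξ) * (Φ.F (0 : L2 d) : Ed d → ℂ) ξ)
      =ᵐ[volume] (0 : Ed d → ℂ) := by
    have : (Φ.F (0 : L2 d) : Ed d → ℂ) =ᵐ[volume] 0 := by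
      rw [_root_.map_zero]; exact Lp.coeFn_zero _ _ _
    filter_upwards [this] with ξ hξ
    simp [hξ]
  have hm : MemLp (fun ξ => (starRingEnd ℂ) ((Φ.F u : Ed d → ℂ) ξ) * (Φ.F (0 : L2 d) : Ed d → ℂ) ξ)
      2 (volume : Measure (Ed d)) := (memLp_congr_ae h0).2 MemLp.zero
  rw [dif_pos hm]
  have : hm.toLp _ = 0 := by
    rw [MemLp.toLp_congr hm MemLp.zero h0, MemLp.toLp_zero]
  rw [this, _root_.map_zero]

set_option maxHeartbeats 1000000 in
lemma starConv_smul {d : ℕ} (Φ : FourierL2 d) (u f : L2 d) (c : ℂ) :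
    starConv Φ u (c • f) = c • starConv Φ u f := by
  by_cases hc : c = 0
  · simp [hc, starConv_zero]
  set g₁ := fun ξ => (starRingEnd ℂ) ((Φ.F u : Ed d → ℂ) ξ) * (Φ.F f : Ed d → ℂ) ξ with hg₁
  set g₂ := fun ξ => (starRingEnd ℂ) ((Φ.F u : Ed d → ℂ) ξ) * (Φ.F (c • f) : Ed d → ℂ) ξ with hg₂
  have hae : g₂ =ᵐ[volume] c • g₁ := by
    have h1 : (Φ.F (c • f) : Ed d → ℂ) =ᵐ[volume] fun ξ => c * (Φ.F f : Ed d → ℂ) ξ := by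
      rw [_root_.map_smul]; exact Lp.coeFn_smul c (Φ.F f)
    filter_upwards [h1] with ξ hξ
    simp only [hg₂, hg₁, hξ, Pi.smul_apply, smul_eq_mul]
    ring
  by_cases hm : MemLp g₁ 2 (volume : Measure (Ed d))
  · have hm2 : MemLp g₂ 2 (volume : Measure (Ed d)) :=
      (memLp_congr_ae hae).2 (hm.const_smul c)
    unfold starConv
    rw [dif_pos hm, dif_pos hm2]
    have : hm2.toLp g₂ = c • hm.toLp g₁ := by
      rw [MemLp.toLp_congr hm2 (hm.const_smul c) hae, MemLp.toLp_const_smul]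
    rw [this, _root_.map_smul]
  · have hm2 : ¬ MemLp g₂ 2 (volume : Measure (Ed d)) := by
      intro h
      apply hm
      have := ((memLp_congr_ae hae).1 h).const_smul c⁻¹
      have he : c⁻¹ • c • g₁ = g₁ := by
        rw [smul_smul, inv_mul_cancel₀ hc, one_smul]
      rwa [he] at this
    unfold starConv
    rw [dif_neg hm, dif_neg hm2, smul_zero]

set_option maxHeartbeats 1600000 in
/-- **order optimality.** If `(u_λ, 𝒱_λ^*, κ_λ)` is a TI-DFD for `𝒦` such
that `0` is an accumulation point of `(κ_λ)` and there are `e_λ` with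
`u_λ^* ∗ e_{λ'} = 0` for `λ ≠ λ'` and `‖u_λ^* ∗ e_λ‖ = 1`, then there is a sequence
`δ_n → 0` with `ε(ℳ_{μ,ρ}, δ_n) ≥ ‖𝒰^*‖⁻¹ ‖(𝒱^*)^†‖^{-2μ/(2μ+1)} δ_n^{2μ/(2μ+1)} ρ^{1/(2μ+1)}`,
where `CU ≥ ‖𝒰^*‖` and `‖(𝒱^*)^†‖ ≤ cV⁻¹` (lower frame bound `cV` of `𝒱^*`). -/
theorem ti_dfd_order_optimality {d : ℕ} {Λ : Type*} [Countable Λ]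
    {Y : Type*} [NormedAddCommGroup Y] [InnerProductSpace ℂ Y] [CompleteSpace Y]
    (Φ : FourierL2 d)
    (dom : Submodule ℂ (L2 d)) (K : dom →ₗ[ℂ] Y)
    (hclosed : IsClosed {p : L2 d × Y | ∃ hp : p.1 ∈ dom, K ⟨p.1, hp⟩ = p.2})
    -- the TI-DFD (u, 𝒱^*, κ):
    (u : Λ → L2 d) (hu : ∃ A B : ℝ, IsTIFrame Φ u A B)
    (V : Λ → Y →L[ℂ] L2 d)
    (κ : Λ → ℝ) (hκ : ∀ l, 0 < κ l)
    (hdiag : ∀ (f : dom) (l : Λ), V l (K f) = κ l • starConv Φ (u l) (f : L2 d))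
    -- 0 is an accumulation point of (κ_λ):
    (hacc : ∀ ε > (0 : ℝ), ∃ l : Λ, κ l < ε)
    -- the family (e_λ):
    (e : Λ → L2 d) (hedom : ∀ l, e l ∈ dom)
    (heorth : ∀ l l' : Λ, l ≠ l' → starConv Φ (u l) (e l') = 0)
    (henorm : ∀ l : Λ, ‖starConv Φ (u l) (e l)‖ = 1)
    -- norm bound CU for the TI-analysis operator 𝒰^*:
    (CU : ℝ) (hCU : 0 < CU)
    (hCUbound : ∀ f : L2 d, ∑' l : Λ, ‖starConv Φ (u l) f‖ ^ 2 ≤ CU ^ 2 * ‖f‖ ^ 2)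
    -- lower frame bound cV of 𝒱^*, so that ‖(𝒱^*)^†‖ ≤ cV⁻¹:
    (cV : ℝ) (hcV : 0 < cV)
    (hcVbound : ∀ g ∈ closure (Set.range fun f : dom => K f),
      cV ^ 2 * ‖g‖ ^ 2 ≤ ∑' l : Λ, ‖V l g‖ ^ 2)
    (μ ρ : ℝ) (hμ : 0 < μ) (hρ : 0 < ρ) :
    ∃ δs : ℕ → ℝ, (∀ n, 0 < δs n) ∧ Filter.Tendsto δs Filter.atTop (nhds 0) ∧
      ∀ n : ℕ,
        ENNReal.ofReal (CU⁻¹ * cV ^ (2 * μ / (2 * μ + 1)) *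
            δs n ^ (2 * μ / (2 * μ + 1)) * ρ ^ (1 / (2 * μ + 1))) ≤
        ⨆ (f : L2 d) (_ : (∃ hf : f ∈ dom,
            (∃ h : Λ → L2 d, (∑' l : Λ, ‖h l‖ ^ 2) ≤ ρ ^ 2 ∧
              ∀ l : Λ, starConv Φ (u l) f = (κ l ^ (2 * μ) : ℝ) • h l) ∧
            ‖K ⟨f, hf⟩‖ ≤ δs n)), ENNReal.ofReal ‖f‖ := by
  classical
  have rsmul : ∀ (r : ℝ) (x : L2 d), (r : ℂ) • x = r • x := fun r x =>
    (RCLike.real_smul_eq_coe_smul (K := ℂ) r x).symm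
  -- lower bound on ‖e λ₀‖
  obtain ⟨A, B, hAB⟩ := hu
  obtain ⟨-, hA, -, hframe⟩ := hAB
  have helow : ∀ l0 : Λ, CU⁻¹ ≤ ‖e l0‖ := by
    intro l0
    by_cases hs : Summable (fun l' => ‖starConv Φ (u l') (e l0)‖ ^ 2)
    · have h1 : ‖starConv Φ (u l0) (e l0)‖ ^ 2 ≤ ∑' l', ‖starConv Φ (u l') (e l0)‖ ^ 2 :=
        hs.le_tsum l0 (fun j _ => by positivity)
      rw [henorm l0, one_pow] at h1
      have h3 : 1 ≤ CU ^ 2 * ‖e l0‖ ^ 2 := h1.trans (hCUbound (e l0))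
      rw [inv_eq_one_div, div_le_iff₀ hCU]
      nlinarith [mul_nonneg hCU.le (norm_nonneg (e l0)), h3]
    · exfalso
      have h0 := (hframe (e l0)).1
      rw [tsum_eq_zero_of_not_summable hs] at h0
      have h2 : ‖e l0‖ ^ 2 ≤ 0 := by nlinarith
      have h4 : e l0 = 0 := by
        have := le_antisymm h2 (by positivity)
        rwa [pow_eq_zero_iff (by norm_num), norm_eq_zero] at this
      have h5 := henorm l0
      rw [h4, starConv_zero] at h5
      simp at h5
  -- choose the sequence of indices
  have hchoice : ∀ n : ℕ, ∃ l0 : Λ, κ l0 < 1 / (n + 1) := fun n => hacc _ (by positivity)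
  choose l hl using hchoice
  set c : ℕ → ℝ := fun n => ρ * κ (l n) ^ (2 * μ) with hc
  have hcpos : ∀ n, 0 < c n := fun n => by
    have := Real.rpow_pos_of_pos (hκ (l n)) (2 * μ); positivity
  refine ⟨fun n => cV⁻¹ * (κ (l n) * c n), fun n => by
      have h1 := hcpos n; have h2 := hκ (l n); positivity, ?_, ?_⟩
  · -- tendsto 0
    have hκ0 : Filter.Tendsto (fun n => κ (l n)) Filter.atTop (nhds 0) := by
      refine squeeze_zero (fun n => (hκ (l n)).le) (fun n => (hl n).le) ?_
      exact tendsto_one_div_add_atTop_nhds_zero_nat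
    have h2 : Filter.Tendsto (fun n => κ (l n) ^ (2 * μ)) Filter.atTop (nhds 0) := by
      have := hκ0.rpow_const (p := 2 * μ) (Or.inr (by linarith))
      rwa [Real.zero_rpow (by linarith : (2 * μ : ℝ) ≠ 0)] at this
    have h1 : Filter.Tendsto (fun n => κ (l n) * c n) Filter.atTop (nhds 0) := by
      have := hκ0.mul ((h2.const_mul ρ))
      simpa using this
    simpa using h1.const_mul cV⁻¹
  · intro n
    have hk : (0 : ℝ) < κ (l n) := hκ (l n)
    have hkle : (0 : ℝ) ≤ κ (l n) := hk.le
    set s : L2 d := starConv Φ (u (l n)) (e (l n)) with hsdef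
    set f₀ : L2 d := ((c n : ℝ) : ℂ) • e (l n) with hf₀def
    have hf₀ : f₀ ∈ dom := dom.smul_mem _ (hedom (l n))
    have hsc : ∀ l' : Λ, starConv Φ (u l') f₀ = ((c n : ℝ) : ℂ) • starConv Φ (u l') (e (l n)) :=
      fun l' => starConv_smul Φ (u l') (e (l n)) _
    -- the source condition
    have hsource : ∃ h : Λ → L2 d, (∑' l' : Λ, ‖h l'‖ ^ 2) ≤ ρ ^ 2 ∧
        ∀ l' : Λ, starConv Φ (u l') f₀ = (κ l' ^ (2 * μ) : ℝ) • h l' := by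
      refine ⟨fun l' => if l' = l n then (ρ : ℝ) • s else 0, ?_, ?_⟩
      · rw [tsum_eq_single (l n) (fun b hb => by simp [hb])]
        rw [show (fun l' => if l' = l n then (ρ : ℝ) • s else 0) (l n) = (ρ : ℝ) • s from by simp]
        rw [norm_smul, hsdef, henorm, Real.norm_eq_abs, abs_of_pos hρ, mul_one]
      · intro l'
        by_cases hl' : l' = l n
        · subst hl'
          rw [show (fun l'' => if l'' = l n then (ρ : ℝ) • s else 0) (l n) = (ρ : ℝ) • s from by
            simp]
          rw [hsc, smul_smul, ← rsmul, hc]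
          simp only
          norm_cast
          rw [mul_comm]
        · rw [show (fun l'' => if l'' = l n then (ρ : ℝ) • s else 0) l' = 0 from by simp [hl']]
          rw [hsc, heorth l' (l n) hl', smul_zero, smul_zero]
    -- bound on ‖K f₀‖
    have hKb : ‖K ⟨f₀, hf₀⟩‖ ≤ cV⁻¹ * (κ (l n) * c n) := by
      set g : Y := K ⟨f₀, hf₀⟩ with hg
      have hgcl : g ∈ closure (Set.range fun f : dom => K f) :=
        subset_closure ⟨⟨f₀, hf₀⟩, rfl⟩
      have hVsum : ∑' l' : Λ, ‖V l' g‖ ^ 2 = (κ (l n) * c n) ^ 2 := by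
        rw [tsum_eq_single (l n) (fun b hb => by
          rw [hg, hdiag ⟨f₀, hf₀⟩ b]
          simp only [hsc b, heorth b (l n) hb, smul_zero, norm_zero]
          norm_num)]
        rw [hg, hdiag ⟨f₀, hf₀⟩ (l n)]
        simp only [hsc (l n)]
        rw [norm_smul, norm_smul, ← hsdef, henorm, mul_one, Real.norm_eq_abs,
          abs_of_pos hk, Complex.norm_real, Real.norm_eq_abs, abs_of_pos (hcpos n)]
      have hV := hcVbound g hgcl
      rw [hVsum] at hV
      have h' : (cV * ‖g‖) ^ 2 ≤ (κ (l n) * c n) ^ 2 := by nlinarith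
      have h'' := Real.sqrt_le_sqrt h'
      rw [Real.sqrt_sq (by positivity), Real.sqrt_sq (by positivity)] at h''
      rw [inv_mul_eq_div, le_div_iff₀ hcV]
      linarith [h'']
    -- the witness satisfies the defining property of the set
    have hP : (∃ hf : f₀ ∈ dom,
        (∃ h : Λ → L2 d, (∑' l' : Λ, ‖h l'‖ ^ 2) ≤ ρ ^ 2 ∧
          ∀ l' : Λ, starConv Φ (u l') f₀ = (κ l' ^ (2 * μ) : ℝ) • h l') ∧
        ‖K ⟨f₀, hf⟩‖ ≤ cV⁻¹ * (κ (l n) * c n)) := ⟨hf₀, hsource, hKb⟩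
    -- the constant equals CU⁻¹ * c n
    have ha : (2 * μ + 1) * (2 * μ / (2 * μ + 1)) = 2 * μ := by
      field_simp
    have hab : 2 * μ / (2 * μ + 1) + 1 / (2 * μ + 1) = 1 := by
      field_simp
    have e1 : cV ^ (2 * μ / (2 * μ + 1)) * (cV⁻¹) ^ (2 * μ / (2 * μ + 1)) = 1 := by
      rw [← Real.mul_rpow hcV.le (by positivity), mul_inv_cancel₀ hcV.ne', Real.one_rpow]
    have e2 : ρ ^ (2 * μ / (2 * μ + 1)) * ρ ^ (1 / (2 * μ + 1)) = ρ := by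
      rw [← Real.rpow_add hρ, hab, Real.rpow_one]
    have e3 : (κ (l n) ^ (2 * μ + 1 : ℝ)) ^ (2 * μ / (2 * μ + 1)) = κ (l n) ^ (2 * μ : ℝ) := by
      rw [← Real.rpow_mul hkle, ha]
    have hδ : cV⁻¹ * (κ (l n) * c n) = cV⁻¹ * (ρ * κ (l n) ^ (2 * μ + 1 : ℝ)) := by
      have hx : κ (l n) ^ (2 * μ + 1 : ℝ) = κ (l n) ^ (2 * μ : ℝ) * κ (l n) := by
        rw [Real.rpow_add hk, Real.rpow_one]
      rw [hx, hc]; ring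
    have key : CU⁻¹ * cV ^ (2 * μ / (2 * μ + 1)) *
        (cV⁻¹ * (κ (l n) * c n)) ^ (2 * μ / (2 * μ + 1)) * ρ ^ (1 / (2 * μ + 1))
        = CU⁻¹ * c n := by
      rw [hδ, Real.mul_rpow (by positivity) (by positivity),
        Real.mul_rpow (by positivity) (by positivity), e3, hc]
      simp only
      linear_combination (CU⁻¹ * κ (l n) ^ (2 * μ : ℝ) *
          (ρ ^ (2 * μ / (2 * μ + 1)) * ρ ^ (1 / (2 * μ + 1)))) * e1 +
        CU⁻¹ * κ (l n) ^ (2 * μ : ℝ) * e2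
    -- conclude
    rw [key]
    have hnorm : CU⁻¹ * c n ≤ ‖f₀‖ := by
      rw [hf₀def, norm_smul, Complex.norm_real, Real.norm_eq_abs, abs_of_pos (hcpos n)]
      calc CU⁻¹ * c n = c n * CU⁻¹ := by ring
        _ ≤ c n * ‖e (l n)‖ := by
            exact mul_le_mul_of_nonneg_left (helow (l n)) (hcpos n).le
    calc ENNReal.ofReal (CU⁻¹ * c n) ≤ ENNReal.ofReal ‖f₀‖ := ENNReal.ofReal_le_ofReal hnorm
      _ ≤ _ := by
          apply le_iSup_of_le f₀
          exact le_iSup_of_le hP le_rfl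

end
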